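/- Under common support, conditionally independent censoring, and a correctly specified censoring model G(t|x,a) > 0, the IPCW-DR estimator is unbiased for V(π_e,t) if the propensity score π_0(a|x) is correctly specified, for any outcome model Ŝ(x,a,t). That is, E[w(x,a)(I{min(L,C)>t}/G(t|x,a) − Ŝ(x,a,t)) + Σ_{a'} π_e(a'|x) Ŝ(x,a',t)] = V(π_e,t), where w(x,a) = π_e(a|x)/π_0(a|x) and the outer expectation is over (x,a,L,C) ~ p(x)π_0(a|x)p(L,C|x,a). -/

import Mathlib

open MeasureTheory Finset

/-- Unbiasedness of the IPCW-DR estimator when the propensity score is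
correctly specified, for an arbitrary outcome model `Ŝ`. -/
theorem ipcw_dr_unbiased_propensity
    {X A Ω : Type*} [Fintype X] [Fintype A] [MeasurableSpace Ω]
    (p : X → ℝ) (hp : ∀ x, 0 ≤ p x) (hp1 : ∑ x, p x = 1)
    (π0 πe : X → A → ℝ)
    (hπ0 : ∀ x a, 0 ≤ π0 x a) (hπ0s : ∀ x, ∑ a, π0 x a = 1)
    (hπe : ∀ x a, 0 ≤ πe x a) (hπes : ∀ x, ∑ a, πe x a = 1)
    (hsupp : ∀ x a, 0 < πe x a → 0 < π0 x a)
    (μ : X → A → Measure Ω) [∀ x a, IsProbabilityMeasure (μ x a)]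
    (L C : Ω → ℝ) (hL : Measurable L) (hC : Measurable C)
    (hInd : ∀ x a (s u : ℝ), μ x a {ω | s < L ω ∧ u < C ω} =
      μ x a {ω | s < L ω} * μ x a {ω | u < C ω})
    (t : ℝ)
    (hG : ∀ x a, 0 < (μ x a {ω | t < C ω}).toReal)
    (Shat : X → A → ℝ → ℝ) :
    ∑ x, p x * ∑ a, π0 x a *
        ∫ ω, ((πe x a / π0 x a) *
            (Set.indicator {ω : Ω | t < min (L ω) (C ω)} (fun _ => (1 : ℝ)) ω
              / (μ x a {ω | t < C ω}).toReal - Shat x a t)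
          + ∑ a', πe x a' * Shat x a' t) ∂(μ x a)
      = ∑ x, p x * ∑ a, πe x a * (μ x a {ω | t < L ω}).toReal := by
  have key : ∀ x a, ∫ ω, ((πe x a / π0 x a) *
            (Set.indicator {ω : Ω | t < min (L ω) (C ω)} (fun _ => (1 : ℝ)) ω
              / (μ x a {ω | t < C ω}).toReal - Shat x a t)
          + ∑ a', πe x a' * Shat x a' t) ∂(μ x a)
      = (πe x a / π0 x a) * ((μ x a {ω | t < L ω}).toReal - Shat x a t)
          + ∑ a', πe x a' * Shat x a' t := by
    intro x a
    have hs : MeasurableSet {ω : Ω | t < min (L ω) (C ω)} :=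
      measurableSet_lt measurable_const (hL.min hC)
    have hint : Integrable
        (Set.indicator {ω : Ω | t < min (L ω) (C ω)} (fun _ => (1 : ℝ))) (μ x a) :=
      (integrable_const (1 : ℝ)).indicator hs
    have hind : ∫ ω, Set.indicator {ω : Ω | t < min (L ω) (C ω)} (fun _ => (1 : ℝ)) ω ∂(μ x a)
        = (μ x a {ω | t < min (L ω) (C ω)}).toReal := by
      rw [integral_indicator hs]
      simp
      rfl
    have hset : {ω : Ω | t < min (L ω) (C ω)} = {ω : Ω | t < L ω ∧ t < C ω} := by
      ext ω; simp [lt_min_iff]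
    have hprod : (μ x a {ω : Ω | t < min (L ω) (C ω)}).toReal
        = (μ x a {ω | t < L ω}).toReal * (μ x a {ω | t < C ω}).toReal := by
      rw [hset, hInd x a t t, ENNReal.toReal_mul]
    have h1 : Integrable (fun ω => (πe x a / π0 x a) *
        (Set.indicator {ω : Ω | t < min (L ω) (C ω)} (fun _ => (1 : ℝ)) ω
          / (μ x a {ω | t < C ω}).toReal - Shat x a t)) (μ x a) :=
      (((hint.div_const _).sub (integrable_const _)).const_mul _)
    rw [integral_add h1 (integrable_const _), integral_const]
    simp only [measure_univ, probReal_univ, ENNReal.toReal_one, one_smul]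
    rw [integral_const_mul, integral_sub (hint.div_const _) (integrable_const _),
      integral_div, hind, integral_const]
    simp only [measure_univ, probReal_univ, ENNReal.toReal_one, one_smul]
    rw [hprod, mul_div_assoc, div_self (ne_of_gt (hG x a)), mul_one]
  refine Finset.sum_congr rfl fun x _ => ?_
  congr 1
  rw [Finset.sum_congr rfl fun a _ => by rw [key x a]]
  have hxa : ∀ a, π0 x a * ((πe x a / π0 x a) * ((μ x a {ω | t < L ω}).toReal - Shat x a t))
      = πe x a * ((μ x a {ω | t < L ω}).toReal - Shat x a t) := by
    intro a
    rcases eq_or_lt_of_le (hπ0 x a) with h0 | h0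
    · have he : πe x a = 0 := by
        by_contra h
        exact absurd (hsupp x a (lt_of_le_of_ne (hπe x a) (Ne.symm h))) (by rw [← h0]; simp)
      simp [← h0, he]
    · field_simp
  calc ∑ a, π0 x a * ((πe x a / π0 x a) * ((μ x a {ω | t < L ω}).toReal - Shat x a t)
          + ∑ a', πe x a' * Shat x a' t)
      = ∑ a, (πe x a * ((μ x a {ω | t < L ω}).toReal - Shat x a t)
          + π0 x a * ∑ a', πe x a' * Shat x a' t) := by
        refine Finset.sum_congr rfl fun a _ => ?_
        rw [mul_add, hxa a]
    _ = (∑ a, πe x a * ((μ x a {ω | t < L ω}).toReal - Shat x a t))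
          + (∑ a, π0 x a) * (∑ a', πe x a' * Shat x a' t) := by
        rw [Finset.sum_add_distrib, Finset.sum_mul]
    _ = ∑ a, πe x a * (μ x a {ω | t < L ω}).toReal := by
        rw [hπ0s x, one_mul, ← Finset.sum_add_distrib]
        exact Finset.sum_congr rfl fun a _ => by ring
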